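/- Let T ≥ 1 be an integer, 0 < β < T, α = (β/T)^{1/T}, and κ > 0. Let c₂ = exp( (1/(2κ))·(2β/ln(T/β)) ). Then ∑_{t=1}^T α^{2t} exp( −(1/(2κ)) ∑_{i=t+1}^T α^i ) ≤ 16 κ² c₂ (ln(T/β))² / (e² α² T). -/

import Mathlib

lemma exp_neg_le_aux (x : ℝ) (hx : 0 < x) :
    Real.exp (-x) ≤ 4 / (Real.exp 1 ^ 2 * x ^ 2) := by
  have h1 : x / 2 ≤ Real.exp (x / 2) / Real.exp 1 := by
    have h := Real.add_one_le_exp (x / 2 - 1)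
    have h2 : Real.exp (x / 2 - 1) = Real.exp (x / 2) / Real.exp 1 := Real.exp_sub _ _
    rw [h2] at h; linarith
  have hsq : (x / 2) ^ 2 ≤ (Real.exp (x / 2) / Real.exp 1) ^ 2 :=
    pow_le_pow_left₀ (by positivity) h1 2
  have hexp : (Real.exp (x / 2)) ^ 2 = Real.exp x := by
    rw [sq, ← Real.exp_add]; ring_nf
  have key : x ^ 2 / 4 ≤ Real.exp x / Real.exp 1 ^ 2 := by
    rw [div_pow, div_pow, hexp] at hsq
    have : (x:ℝ) ^ 2 / 2 ^ 2 = x ^ 2 / 4 := by norm_num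
    linarith [this ▸ hsq]
  have key2 : Real.exp 1 ^ 2 * x ^ 2 ≤ 4 * Real.exp x := by
    rw [div_le_div_iff₀ (by norm_num) (by positivity)] at key
    nlinarith
  rw [Real.exp_neg, ← one_div, div_le_div_iff₀ (Real.exp_pos x) (by positivity)]
  linarith

theorem stmt14 (T : ℕ) (hT : 1 ≤ T) (β : ℝ) (hβ : 0 < β) (hβT : β < T)
    (α : ℝ) (hα : α = (β / T) ^ ((T : ℝ)⁻¹)) (κ : ℝ) (hκ : 0 < κ) :
    ∑ t ∈ Finset.Icc 1 T,
        α ^ (2 * t) * Real.exp (-(1 / (2 * κ)) * ∑ i ∈ Finset.Icc (t + 1) T, α ^ i) ≤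
      16 * κ ^ 2 * Real.exp ((1 / (2 * κ)) * (2 * β / Real.log (T / β))) *
          Real.log (T / β) ^ 2 / (Real.exp 1 ^ 2 * α ^ 2 * T) := by
  have hT0 : (0:ℝ) < T := by
    have : (1:ℝ) ≤ T := by exact_mod_cast hT
    linarith
  have hβT0 : 0 < β / T := div_pos hβ hT0
  have hβT1 : β / T < 1 := (div_lt_one hT0).mpr hβT
  have hα0 : 0 < α := hα ▸ Real.rpow_pos_of_pos hβT0 _
  have hα1 : α < 1 := by
    rw [hα]; exact Real.rpow_lt_one hβT0.le hβT1 (by positivity)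
  set L := Real.log (T / β) with hLdef
  have hL : 0 < L := Real.log_pos ((one_lt_div hβ).mpr hβT)
  have hlogα : Real.log α = -(L / T) := by
    rw [hα, Real.log_rpow hβT0, hLdef, Real.log_div (ne_of_gt hβ) (ne_of_gt hT0),
      Real.log_div (ne_of_gt hT0) (ne_of_gt hβ)]
    field_simp
    ring
  have hαe : α = Real.exp (-(L / T)) := by rw [← hlogα, Real.exp_log hα0]
  have h1 : 1 - α ≤ L / T := by
    have h := Real.add_one_le_exp (-(L / T))
    rw [← hαe] at h; linarith
  have h2 : α * (L / T) ≤ 1 - α := by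
    have h := Real.add_one_le_exp (L / T)
    have h3 : α * Real.exp (L / T) = 1 := by
      rw [hαe, ← Real.exp_add]; simp
    nlinarith
  have h1α : 0 < 1 - α := by linarith
  have hαT : α ^ T = β / T := by
    rw [hα, ← Real.rpow_natCast ((β/T) ^ ((T:ℝ)⁻¹)) T, ← Real.rpow_mul hβT0.le,
      inv_mul_cancel₀ (ne_of_gt hT0), Real.rpow_one]
  have hne1 : α ≠ 1 := ne_of_lt hα1
  have hne1' : (1:ℝ) - α ≠ 0 := ne_of_gt h1α
  have hαne : α ≠ 0 := ne_of_gt hα0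
  have hκne : κ ≠ 0 := ne_of_gt hκ
  have hene : Real.exp 1 ≠ 0 := Real.exp_ne_zero 1
  have hc : α ^ (T + 1) / (1 - α) ≤ 2 * β / L := by
    have hnum : α ^ (T + 1) = β / T * α := by rw [pow_succ, hαT]
    have hden : 0 < α * (L / T) := by positivity
    have step1 : α ^ (T+1) / (1-α) ≤ (β / T * α) / (α * (L / T)) := by
      rw [hnum]
      exact div_le_div_of_nonneg_left (by positivity) hden h2
    have step2 : (β / T * α) / (α * (L / T)) = β / L := by
      field_simp
    have step3 : β / L ≤ 2 * β / L := by
      rw [div_le_div_iff₀ hL hL]; nlinarith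
    linarith [step2 ▸ step1]
  set c₂ : ℝ := Real.exp ((1 / (2 * κ)) * (2 * β / L)) with hc₂def
  have hc₂pos : 0 < c₂ := Real.exp_pos _
  have hterm : ∀ t ∈ Finset.Icc 1 T,
      α ^ (2 * t) * Real.exp (-(1 / (2 * κ)) * ∑ i ∈ Finset.Icc (t + 1) T, α ^ i) ≤
        16 * κ ^ 2 * (1 - α) ^ 2 / (Real.exp 1 ^ 2 * α ^ 2) * c₂ := by
    intro t ht
    obtain ⟨ht1, htT⟩ := Finset.mem_Icc.mp ht
    have hsum : ∑ i ∈ Finset.Icc (t+1) T, α ^ i = (α ^ (t+1) - α ^ (T+1)) / (1 - α) := by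
      rw [← Finset.Ico_add_one_right_eq_Icc, geom_sum_Ico hne1 (by omega)]
      rw [div_eq_div_iff (by intro h; apply hne1'; linarith [sub_eq_zero.mp h]) hne1']
      simp only [Nat.succ_eq_add_one, pow_succ]
      ring
    set x : ℝ := (1 / (2 * κ)) * (α ^ (t+1) / (1 - α)) with hxdef
    have hx0 : 0 < x := by positivity
    have hsplit : -(1 / (2 * κ)) * ((α ^ (t+1) - α ^ (T+1)) / (1 - α)) =
        -x + (1 / (2 * κ)) * (α ^ (T+1) / (1 - α)) := by
      rw [hxdef]; ring
    rw [hsum, hsplit, Real.exp_add]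
    have hexpx : Real.exp (-x) ≤ 4 / (Real.exp 1 ^ 2 * x ^ 2) := exp_neg_le_aux x hx0
    have hexpc : Real.exp ((1 / (2 * κ)) * (α ^ (T+1) / (1 - α))) ≤ c₂ := by
      rw [hc₂def]
      exact Real.exp_le_exp.mpr (mul_le_mul_of_nonneg_left hc (by positivity))
    have hstep : α ^ (2 * t) * (Real.exp (-x) * Real.exp ((1 / (2 * κ)) * (α ^ (T+1) / (1 - α)))) ≤
        α ^ (2 * t) * ((4 / (Real.exp 1 ^ 2 * x ^ 2)) * c₂) := by
      gcongr
    refine hstep.trans (le_of_eq ?_)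
    have e1 : (α ^ (t+1)) ^ 2 = α ^ (2*t) * α ^ 2 := by
      rw [← pow_mul, ← pow_add]; congr 1; ring
    have hA : (0:ℝ) < α ^ (2*t) := by positivity
    have hxval : x ^ 2 = α ^ (2*t) * α ^ 2 / (4 * κ^2 * (1-α)^2) := by
      rw [hxdef, mul_pow, div_pow, div_pow, e1]
      field_simp
      ring
    rw [hxval]
    have hAne : (α:ℝ) ^ (2*t) ≠ 0 := ne_of_gt hA
    field_simp
    ring
  have hcard : (Finset.Icc 1 T).card = T := by
    rw [Nat.card_Icc]; omega
  have hsumle : ∑ t ∈ Finset.Icc 1 T,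
      α ^ (2 * t) * Real.exp (-(1 / (2 * κ)) * ∑ i ∈ Finset.Icc (t + 1) T, α ^ i) ≤
      (T:ℝ) * (16 * κ ^ 2 * (1 - α) ^ 2 / (Real.exp 1 ^ 2 * α ^ 2) * c₂) := by
    calc ∑ t ∈ Finset.Icc 1 T,
        α ^ (2 * t) * Real.exp (-(1 / (2 * κ)) * ∑ i ∈ Finset.Icc (t + 1) T, α ^ i)
        ≤ ∑ _t ∈ Finset.Icc 1 T, 16 * κ ^ 2 * (1 - α) ^ 2 / (Real.exp 1 ^ 2 * α ^ 2) * c₂ :=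
          Finset.sum_le_sum hterm
      _ = (T:ℝ) * (16 * κ ^ 2 * (1 - α) ^ 2 / (Real.exp 1 ^ 2 * α ^ 2) * c₂) := by
          rw [Finset.sum_const, hcard, nsmul_eq_mul]
  refine hsumle.trans ?_
  have hTL : (T:ℝ) * (1 - α) ^ 2 ≤ L ^ 2 / T := by
    have h' : (1 - α) ^ 2 ≤ (L / T) ^ 2 := pow_le_pow_left₀ h1α.le h1 2
    calc (T:ℝ) * (1 - α) ^ 2 ≤ (T:ℝ) * (L / T) ^ 2 := mul_le_mul_of_nonneg_left h' hT0.le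
      _ = L ^ 2 / T := by field_simp
  have hC : (0:ℝ) < 16 * κ ^ 2 * c₂ / (Real.exp 1 ^ 2 * α ^ 2) := by positivity
  have lhs_eq : (T:ℝ) * (16 * κ ^ 2 * (1 - α) ^ 2 / (Real.exp 1 ^ 2 * α ^ 2) * c₂) =
      16 * κ ^ 2 * c₂ / (Real.exp 1 ^ 2 * α ^ 2) * ((T:ℝ) * (1 - α) ^ 2) := by ring
  have rhs_eq : 16 * κ ^ 2 * c₂ * L ^ 2 / (Real.exp 1 ^ 2 * α ^ 2 * T) =
      16 * κ ^ 2 * c₂ / (Real.exp 1 ^ 2 * α ^ 2) * (L ^ 2 / T) := by ring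
  rw [lhs_eq, rhs_eq]
  exact mul_le_mul_of_nonneg_left hTL hC.le
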